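/- Let E be a real Hilbert space and C a bounded skew-symmetric contraction on E, extended to E_ℂ. Set V := (1 + iC)(E). Then V + iV is dense in E_ℂ if and only if the operator 1 + iC on E_ℂ is injective. -/

import Mathlib

open scoped ComplexInnerProductSpace

/-- With `V = (1 + iC)E ⊆ E_ℂ` (complexification modelled via a
conjugation `σ` on a complex Hilbert space `H`), `V + iV` is dense in `E_ℂ`
iff the operator `1 + iC` on `E_ℂ` is injective. -/
theorem stmt4 {H : Type*} [NormedAddCommGroup H] [InnerProductSpace ℂ H] [CompleteSpace H]
    (σ : H →ₛₗ[starRingEnd ℂ] H)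
    (hσ2 : ∀ x, σ (σ x) = x)
    (hσinner : ∀ x y, ⟪σ x, σ y⟫ = ⟪y, x⟫)
    (C : H →L[ℂ] H)
    (hCσ : ∀ x, σ (C x) = C (σ x))
    (hskew : ∀ x y, ⟪C x, y⟫ = -⟪x, C y⟫)
    (hcontr : ∀ x, ‖C x‖ ≤ ‖x‖) :
    Dense {z : H | ∃ v w, σ v = v ∧ σ w = w ∧
        z = (v + Complex.I • C v) + Complex.I • (w + Complex.I • C w)} ↔
    Function.Injective (fun x : H => x + Complex.I • C x) := by
  set T : H →L[ℂ] H := ContinuousLinearMap.id ℂ H + Complex.I • C with hTdef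
  have hT : ∀ x, T x = x + Complex.I • C x := fun x => rfl
  have hset : {z : H | ∃ v w, σ v = v ∧ σ w = w ∧
      z = (v + Complex.I • C v) + Complex.I • (w + Complex.I • C w)} = Set.range T := by
    ext z
    constructor
    · rintro ⟨v, w, hv, hw, rfl⟩
      refine ⟨v + Complex.I • w, ?_⟩
      rw [hT, map_add, map_smul]
      simp only [smul_add, smul_smul]
      module
    · rintro ⟨x, rfl⟩
      refine ⟨(2:ℂ)⁻¹ • (x + σ x), (-(Complex.I) * (2:ℂ)⁻¹) • (x - σ x), ?_, ?_, ?_⟩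
      · rw [map_smulₛₗ, map_add, hσ2,
          show (starRingEnd ℂ) ((2:ℂ)⁻¹) = (2:ℂ)⁻¹ by simp [Complex.ext_iff]]
        module
      · rw [map_smulₛₗ, map_sub, hσ2,
          show (starRingEnd ℂ) (-(Complex.I) * (2:ℂ)⁻¹) = Complex.I * (2:ℂ)⁻¹ by
            simp [Complex.ext_iff]]
        module
      · have key : (2:ℂ)⁻¹ • (x + σ x)
            + Complex.I • ((-(Complex.I) * (2:ℂ)⁻¹) • (x - σ x)) = x := by
          simp only [smul_smul, smul_add, smul_sub]
          rw [show Complex.I * (-(Complex.I) * (2:ℂ)⁻¹) = (2:ℂ)⁻¹ by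
            rw [← mul_assoc, mul_neg, Complex.I_mul_I, neg_neg, one_mul]]
          module
        calc T x
            = T ((2:ℂ)⁻¹ • (x + σ x)
              + Complex.I • ((-(Complex.I) * (2:ℂ)⁻¹) • (x - σ x))) := by rw [key]
          _ = _ := by
              simp only [hT, map_add, map_smul, smul_add, smul_smul]
              module
  rw [hset]
  have hinjT : Function.Injective (fun x : H => x + Complex.I • C x) ↔ Function.Injective T := by
    constructor <;> (intro h a b hab; exact h hab)
  rw [hinjT]
  have hsym : ∀ x y : H, ⟪T x, y⟫ = ⟪x, T y⟫ := by
    intro x y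
    rw [hT, hT, inner_add_left, inner_add_right, inner_smul_left, inner_smul_right, hskew]
    simp [Complex.conj_I]
  constructor
  · intro hd
    have hd' : Dense ((LinearMap.range (T : H →ₗ[ℂ] H) : Submodule ℂ H) : Set H) := by
      simpa [LinearMap.coe_range] using hd
    intro a b hab
    have h0 : T (a - b) = 0 := by rw [map_sub, hab, sub_self]
    have hz : a - b = 0 := by
      refine hd'.eq_zero_of_inner_right ℂ fun v hv => ?_
      obtain ⟨y, hy⟩ := hv
      rw [show (v : H) = T y from hy.symm, hsym, h0, inner_zero_right]
    exact sub_eq_zero.mp hz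
  · intro hinj
    have horth : (LinearMap.range (T : H →ₗ[ℂ] H))ᗮ = ⊥ := by
      rw [Submodule.eq_bot_iff]
      intro x hx
      have h2 : ∀ y, ⟪y, T x⟫ = 0 := fun y => by
        have := hx (T y) ⟨y, rfl⟩
        rwa [hsym] at this
      have hTx : T x = 0 := inner_self_eq_zero.mp (h2 (T x))
      have : T x = T 0 := by rw [hTx, map_zero]
      exact hinj this
    have htop := (Submodule.topologicalClosure_eq_top_iff
      (K := LinearMap.range (T : H →ₗ[ℂ] H))).mpr horth
    have hd : Dense ((LinearMap.range (T : H →ₗ[ℂ] H) : Submodule ℂ H) : Set H) := by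
      rw [← Submodule.dense_iff_topologicalClosure_eq_top] at htop
      exact htop
    simpa [LinearMap.coe_range] using hd
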